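/- Let n ≥ 1 and let (a_i, b_i), i ∈ {1, ..., n}, be pairs of real numbers; let a_(1) ≤ ... ≤ a_(n) and b_(1) ≤ ... ≤ b_(n) denote the two sorted lists, and let ε ∈ ℝ. (i) If j, k ∈ {1, ..., n} satisfy b_(k) > a_(j) + ε, then the number of indices i with b_i > a_i + ε is at least j − k + 1. (ii) In particular, if α ∈ (0,1), δ ∈ [0, α), k = ⌈(n + 1)(1 − α)⌉ and j = ⌈(n + 1)(1 − α + δ)⌉, then j − k + 1 ≥ (n + 1)δ. -/

import Mathlib

/-- The `k`-th smallest value (1-indexed) among `v 0, ..., v (n-1)`. -/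
noncomputable def kthSmallest {n : ℕ} (k : ℕ) (v : Fin n → ℝ) : ℝ :=
  (Multiset.sort (Multiset.map v Finset.univ.val) (· ≤ ·)).getD (k - 1) 0

lemma card_univ_val {n : ℕ} : Multiset.card (Finset.univ.val : Multiset (Fin n)) = n := by
  simp

lemma sort_len {n : ℕ} (v : Fin n → ℝ) :
    (Multiset.sort (Multiset.map v Finset.univ.val) (· ≤ ·)).length = n := by
  rw [Multiset.length_sort, Multiset.card_map, card_univ_val]

lemma filter_card_eq_countP {n : ℕ} (v : Fin n → ℝ) (p : ℝ → Prop) [DecidablePred p] :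
    ((Finset.univ.filter (fun i : Fin n => p (v i))).card : ℕ)
      = (Multiset.sort (Multiset.map v Finset.univ.val) (· ≤ ·)).countP (fun x => decide (p x)) := by
  have h1 : (Multiset.map v Finset.univ.val)
      = ↑(Multiset.sort (Multiset.map v Finset.univ.val) (· ≤ ·)) :=
    (Multiset.sort_eq _ _).symm
  have h2 : Multiset.countP p (Multiset.map v Finset.univ.val)
      = (Multiset.sort (Multiset.map v Finset.univ.val) (· ≤ ·)).countP
        (fun x => decide (p x)) := by
    conv_lhs => rw [h1]
    exact Multiset.coe_countP p _
  rw [← h2]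
  rw [Multiset.countP_map v Finset.univ.val p]
  rfl

lemma count_le_kth {n : ℕ} (j : ℕ) (hj1 : 1 ≤ j) (hjn : j ≤ n) (v : Fin n → ℝ) :
    j ≤ (Finset.univ.filter (fun i : Fin n => v i ≤ kthSmallest j v)).card := by
  set l := Multiset.sort (Multiset.map v Finset.univ.val) (· ≤ ·) with hl
  have hlen : l.length = n := sort_len v
  have hsorted : l.Pairwise (· ≤ ·) := Multiset.pairwise_sort _ _
  have hj1' : j - 1 < l.length := by omega
  have hK : kthSmallest j v = l.get ⟨j - 1, hj1'⟩ := by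
    rw [kthSmallest, ← hl, List.getD_eq_getElem l 0 hj1']; rfl
  rw [filter_card_eq_countP v (fun x => x ≤ kthSmallest j v)]
  have hsplit : l = l.take j ++ l.drop j := (List.take_append_drop j l).symm
  rw [← hl]
  calc j = (l.take j).length := by rw [List.length_take]; omega
    _ ≤ (l.take j).countP (fun x => decide (x ≤ kthSmallest j v)) + (l.drop j).countP
        (fun x => decide (x ≤ kthSmallest j v)) := by
        have : (l.take j).countP (fun x => decide (x ≤ kthSmallest j v))
            = (l.take j).length := by
          apply List.countP_eq_length.mpr
          intro x hx
          obtain ⟨i, hi, hx'⟩ := List.getElem_of_mem hx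
          have hi' : i < j := by have := List.length_take (i := j) (l := l); omega
          have hil : i < l.length := by omega
          have : x = l.get ⟨i, hil⟩ := by
            rw [← hx']; simp [List.getElem_take]
          rw [this, hK]
          simp only [decide_eq_true_eq]
          exact hsorted.rel_get_of_le (by simp [Fin.le_def]; omega)
        omega
    _ = l.countP (fun x => decide (x ≤ kthSmallest j v)) := by
        conv_rhs => rw [hsplit]
        rw [List.countP_append]

lemma count_ge_kth {n : ℕ} (k : ℕ) (hk1 : 1 ≤ k) (hkn : k ≤ n) (v : Fin n → ℝ) :
    n - k + 1 ≤ (Finset.univ.filter (fun i : Fin n => kthSmallest k v ≤ v i)).card := by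
  set l := Multiset.sort (Multiset.map v Finset.univ.val) (· ≤ ·) with hl
  have hlen : l.length = n := sort_len v
  have hsorted : l.Pairwise (· ≤ ·) := Multiset.pairwise_sort _ _
  have hk1' : k - 1 < l.length := by omega
  have hK : kthSmallest k v = l.get ⟨k - 1, hk1'⟩ := by
    rw [kthSmallest, ← hl, List.getD_eq_getElem l 0 hk1']; rfl
  rw [filter_card_eq_countP v (fun x => kthSmallest k v ≤ x)]
  have hsplit : l = l.take (k-1) ++ l.drop (k-1) := (List.take_append_drop (k-1) l).symm
  rw [← hl]
  calc n - k + 1 = (l.drop (k-1)).length := by rw [List.length_drop]; omega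
    _ ≤ (l.take (k-1)).countP (fun x => decide (kthSmallest k v ≤ x)) + (l.drop (k-1)).countP
        (fun x => decide (kthSmallest k v ≤ x)) := by
        have : (l.drop (k-1)).countP (fun x => decide (kthSmallest k v ≤ x))
            = (l.drop (k-1)).length := by
          apply List.countP_eq_length.mpr
          intro x hx
          obtain ⟨i, hi, hx'⟩ := List.getElem_of_mem hx
          have hil : k - 1 + i < l.length := by have := List.length_drop (i := k-1) (l := l); omega
          have : x = l.get ⟨k - 1 + i, hil⟩ := by
            rw [← hx']; simp [List.getElem_drop]
          rw [this, hK]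
          simp only [decide_eq_true_eq]
          exact hsorted.rel_get_of_le (by simp [Fin.le_def])
        omega
    _ = l.countP (fun x => decide (kthSmallest k v ≤ x)) := by
        conv_rhs => rw [hsplit]
        rw [List.countP_append]

/-- Let `(a i, b i)`, `i < n`, be pairs of reals, `ε ∈ ℝ`.
(i) If `j, k ∈ {1, ..., n}` satisfy `b_(k) > a_(j) + ε` (sorted values), then the number of
indices `i` with `b i > a i + ε` is at least `j − k + 1`.
(ii) If `α ∈ (0,1)`, `δ ∈ [0, α)`, `k = ⌈(n + 1)(1 − α)⌉` and `j = ⌈(n + 1)(1 − α + δ)⌉`,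
then `j − k + 1 ≥ (n + 1) δ`. -/
theorem stmt14 (n : ℕ) (hn : 1 ≤ n) (a b : Fin n → ℝ) (ε : ℝ) :
    (∀ j k : ℕ, 1 ≤ j → j ≤ n → 1 ≤ k → k ≤ n →
      kthSmallest j a + ε < kthSmallest k b →
      (j : ℤ) - (k : ℤ) + 1 ≤
        ((Finset.univ.filter (fun i : Fin n => a i + ε < b i)).card : ℤ)) ∧
    (∀ α δ : ℝ, α ∈ Set.Ioo (0:ℝ) 1 → δ ∈ Set.Ico (0:ℝ) α →
      ∀ j k : ℕ, k = ⌈((n:ℝ)+1) * (1-α)⌉₊ → j = ⌈((n:ℝ)+1) * (1-α+δ)⌉₊ →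
      ((n:ℝ)+1) * δ ≤ (j : ℝ) - (k : ℝ) + 1) := by
  constructor
  · intro j k hj1 hjn hk1 hkn hlt
    set A := Finset.univ.filter (fun i : Fin n => a i ≤ kthSmallest j a) with hA
    set B := Finset.univ.filter (fun i : Fin n => kthSmallest k b ≤ b i) with hB
    have hAcard : j ≤ A.card := count_le_kth j hj1 hjn a
    have hBcard : n - k + 1 ≤ B.card := count_ge_kth k hk1 hkn b
    have hsub : A ∩ B ⊆ Finset.univ.filter (fun i : Fin n => a i + ε < b i) := by
      intro i hi
      simp only [hA, hB, Finset.mem_inter, Finset.mem_filter, Finset.mem_univ, true_and] at hi ⊢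
      calc a i + ε ≤ kthSmallest j a + ε := by linarith [hi.1]
        _ < kthSmallest k b := hlt
        _ ≤ b i := hi.2
    have hcard : (A ∩ B).card ≤ (Finset.univ.filter (fun i : Fin n => a i + ε < b i)).card :=
      Finset.card_le_card hsub
    have hunion : (A ∪ B).card ≤ n := by
      calc (A ∪ B).card ≤ (Finset.univ : Finset (Fin n)).card :=
            Finset.card_le_card (Finset.subset_univ _)
        _ = n := by simp
    have key : (A ∪ B).card + (A ∩ B).card = A.card + B.card :=
      Finset.card_union_add_card_inter A B
    omega
  · intro α δ hα hδ j k hk hj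
    obtain ⟨hα0, hα1⟩ := hα
    obtain ⟨hδ0, hδα⟩ := hδ
    have hnn : (0:ℝ) ≤ ((n:ℝ)+1) * (1-α) := by
      apply mul_nonneg <;> [positivity; linarith]
    have hkle : (k:ℝ) < ((n:ℝ)+1) * (1-α) + 1 := by
      rw [hk]; exact Nat.ceil_lt_add_one hnn
    have hjge : ((n:ℝ)+1) * (1-α+δ) ≤ (j:ℝ) := by
      rw [hj]; exact Nat.le_ceil _
    nlinarith
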